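/- The operators B(m) (m ∈ Z, m ≠ 0) acting on the Fock space F by B(m)·(u_{k_1}∧u_{k_2}∧···) = Σ_i u_{k_1}∧···∧(z^m·u_{k_i})∧··· are well defined and satisfy the Heisenberg relations [B(m), B(n)] = LN·m·δ_{m+n,0}·1; moreover they commute with the actions of sl_L^ and sl_N^ on F. -/

import Mathlib

noncomputable section

/-!
The Heisenberg operators `B(m)` on the Fock space `F` (the semi-infinite wedge
space on `V_aff = ℂ[z^{±1}] ⊗ ℂ^L ⊗ ℂ^N`, with basis `u_k`, `k ∈ ℤ`,
`k = k̄ − N(k̇ + L·k̲)`, and `z^m·u_k = u_{k−NLm}`), defined by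
`B(m)·(u_{k_1}∧u_{k_2}∧⋯) = Σ_i u_{k_1}∧⋯∧(z^m·u_{k_i})∧⋯`, are well defined,
satisfy the Heisenberg relations `[B(m), B(n)] = LN·m·δ_{m+n,0}·1`, and commute
with the diagonal actions of `sl_L^` and `sl_N^` on `F`.
-/

namespace FockB

/-- Strictly decreasing, eventually linear momentum sequences: the normally
ordered semi-infinite wedges. -/
def WedgeIdx : Type :=
  {f : ℕ → ℤ // StrictAnti f ∧ ∃ N : ℕ, ∀ i ≥ N, f (i + 1) = f i - 1}

/-- The Fock space `F`. -/
abbrev Fock : Type := WedgeIdx →₀ ℂ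

/-- `k̄ ∈ {1,…,N}` in the decomposition `k = k̄ − N(k̇ + L·k̲)`. -/
def kbar (N : ℕ) (k : ℤ) : ℤ := (k - 1) % N + 1

/-- `k̇ ∈ {1,…,L}` in the decomposition `k = k̄ − N(k̇ + L·k̲)`. -/
def kdot (N L : ℕ) (k : ℤ) : ℤ := ((kbar N k - k) / N - 1) % L + 1

/-- An alternating "wedge symbol" `w : (ℕ → ℤ) → F`: `w f` is the semi-infinite
wedge with momentum sequence `f` — zero if `f` has a repeated momentum,
alternating under exchange of adjacent factors, and equal to the corresponding
basis vector on normally ordered sequences. -/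
def WedgeSymbolSpec (w : (ℕ → ℤ) → Fock) : Prop :=
  (∀ f : ℕ → ℤ, ¬ Function.Injective f → w f = 0) ∧
  (∀ (f : ℕ → ℤ) (i : ℕ), w (f ∘ Equiv.swap i (i + 1)) = - w f) ∧
  (∀ b : WedgeIdx, w b.1 = Finsupp.single b 1)

/-- Specification of the diagonal action on `F` of a one-body operator
`u_k ↦ c(k)·u_{k+d}` of shift type. -/
def DiagSpec (w : (ℕ → ℤ) → Fock) (T : Fock →ₗ[ℂ] Fock) (d : ℤ) (c : ℤ → ℂ) : Prop :=
  ∀ b : WedgeIdx, T (Finsupp.single b 1)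
    = ∑ᶠ i : ℕ, c (b.1 i) • w (Function.update b.1 i (b.1 i + d))

/-- Specification of the diagonal action on `F` of a diagonal one-body operator
`u_k ↦ c(k)·u_k`, with the normal-ordering normalization making it annihilate the
charge-0 vacuum `u_0 ∧ u_{-1} ∧ u_{-2} ∧ ⋯` (as for the Cartan generators). -/
def CartanSpec (T : Fock →ₗ[ℂ] Fock) (c : ℤ → ℂ) : Prop :=
  ∀ b : WedgeIdx, T (Finsupp.single b 1)
    = ((∑ᶠ k ∈ {k : ℤ | 0 < k ∧ k ∈ Set.range b.1}, c k)
        - ∑ᶠ k ∈ {k : ℤ | k ≤ 0 ∧ k ∉ Set.range b.1}, c k) • Finsupp.single b 1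

/-- `T` is one of the Chevalley generators of the diagonal `sl_N^`-action on the
Fock space: `E_t u_k = [k̄ = t+1]·u_{k−1}`, `F_t u_k = [k̄ = t]·u_{k+1}`
(`t = 1,…,N−1`), `E_0 u_k = [k̄ = 1]·u_{k+N−1−NL}`, `F_0 u_k = [k̄ = N]·u_{k+1−N+NL}`,
and `H_t` diagonal with `c(k) = [k̄ = t] − [k̄ = t+1]`. -/
def IsSlNGen (N L : ℕ) (w : (ℕ → ℤ) → Fock) (T : Fock →ₗ[ℂ] Fock) : Prop :=
  (∃ t : ℕ, 1 ≤ t ∧ t < N ∧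
    DiagSpec w T (-1) (fun k => if kbar N k = t + 1 then 1 else 0)) ∨
  (∃ t : ℕ, 1 ≤ t ∧ t < N ∧
    DiagSpec w T 1 (fun k => if kbar N k = t then 1 else 0)) ∨
  DiagSpec w T ((N : ℤ) - 1 - N * L) (fun k => if kbar N k = 1 then 1 else 0) ∨
  DiagSpec w T (1 - (N : ℤ) + N * L) (fun k => if kbar N k = N then 1 else 0) ∨
  (∃ t : ℕ, 1 ≤ t ∧ t < N ∧
    CartanSpec T (fun k => (if kbar N k = t then 1 else 0)
      - (if kbar N k = t + 1 then 1 else 0)))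

/-- `T` is one of the Chevalley generators of the diagonal `sl_L^`-action on the
Fock space: `e_b u_k = [k̇ = L−b]·u_{k−N}` (`b = 0,…,L−1`, incl. `e_0` with
`k̇ = L`), `f_b u_k = [k̇ = L−b+1]·u_{k+N}` (`f_0` with `k̇ = 1`), and `h_b`
diagonal with `c(k) = [k̇ = L−b+1] − [k̇ = L−b]` (`b = 1,…,L−1`). -/
def IsSlLGen (N L : ℕ) (w : (ℕ → ℤ) → Fock) (T : Fock →ₗ[ℂ] Fock) : Prop :=
  (∃ b : ℕ, b < L ∧
    DiagSpec w T (-(N : ℤ)) (fun k => if kdot N L k = (L : ℤ) - b then 1 else 0)) ∨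
  (∃ b : ℕ, 1 ≤ b ∧ b < L ∧
    DiagSpec w T (N : ℤ) (fun k => if kdot N L k = (L : ℤ) - b + 1 then 1 else 0)) ∨
  DiagSpec w T (N : ℤ) (fun k => if kdot N L k = 1 then 1 else 0) ∨
  (∃ b : ℕ, 1 ≤ b ∧ b < L ∧
    CartanSpec T (fun k => (if kdot N L k = (L : ℤ) - b + 1 then 1 else 0)
      - (if kdot N L k = (L : ℤ) - b then 1 else 0)))

section Aux

open Function

variable {w : (ℕ → ℤ) → Fock}

/-- Eventually linear sequence (tail of a wedge). -/
def EvLin (f : ℕ → ℤ) (M : ℕ) : Prop := ∀ i, M ≤ i → f (i + 1) = f i - 1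

lemma EvLin.add {f : ℕ → ℤ} {M : ℕ} (hf : EvLin f M) {i : ℕ} (hi : M ≤ i) (t : ℕ) :
    f (i + t) = f i - t := by
  induction t with
  | zero => simp
  | succ t ih =>
    have h1 : f (i + (t + 1)) = f (i + t) - 1 := by
      rw [← add_assoc]; exact hf _ (by omega)
    rw [h1, ih]; push_cast; ring

lemma EvLin.mono {f : ℕ → ℤ} {M M' : ℕ} (hf : EvLin f M) (h : M ≤ M') : EvLin f M' :=
  fun i hi => hf i (le_trans h hi)

/-- On the tail one can always find the value `f j + d` at another position. -/
lemma EvLin.exists_dup {f : ℕ → ℤ} {M : ℕ} (hf : EvLin f M) {j : ℕ} {d : ℤ} (hd : d ≠ 0)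
    (hj : M + d.natAbs ≤ j) :
    ∃ p : ℕ, p ≠ j ∧ M + d.natAbs ≤ p + d.natAbs + d.natAbs ∧ p ≤ j + d.natAbs ∧
      f p = f j + d := by
  rcases lt_or_gt_of_ne hd with h | h
  · refine ⟨j + d.natAbs, by omega, by omega, le_rfl, ?_⟩
    rw [hf.add (by omega : M ≤ j) d.natAbs]
    have hc : (d.natAbs : ℤ) = -d := by omega
    rw [hc]; ring
  · refine ⟨j - d.natAbs, by omega, by omega, by omega, ?_⟩
    have h2 := hf.add (i := j - d.natAbs) (by omega) d.natAbs
    rw [show j - d.natAbs + d.natAbs = j by omega] at h2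
    have hc : (d.natAbs : ℤ) = d := by omega
    rw [h2, hc]; ring

lemma w_dup (hw : WedgeSymbolSpec w) {f : ℕ → ℤ} {p q : ℕ} (hpq : p ≠ q) (h : f p = f q) :
    w f = 0 :=
  hw.1 f (fun hinj => hpq (hinj h))

lemma swap_decomp (a t : ℕ) :
    ⇑(Equiv.swap a (a + t + 2)) =
      ⇑(Equiv.swap a (a + 1)) ∘ ⇑(Equiv.swap (a + 1) (a + t + 2)) ∘ ⇑(Equiv.swap a (a + 1)) := by
  funext x
  simp only [Function.comp_apply, Equiv.swap_apply_def]
  split_ifs <;> omega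

lemma w_swap_dist (hw : WedgeSymbolSpec w) :
    ∀ (t a : ℕ) (f : ℕ → ℤ), w (f ∘ ⇑(Equiv.swap a (a + t + 1))) = - w f := by
  intro t
  induction t with
  | zero => intro a f; exact hw.2.1 f a
  | succ t ih =>
    intro a f
    have hd := swap_decomp a t
    have h1 : f ∘ ⇑(Equiv.swap a (a + (t + 1) + 1)) =
        (((f ∘ ⇑(Equiv.swap a (a + 1))) ∘ ⇑(Equiv.swap (a + 1) (a + 1 + t + 1)))
          ∘ ⇑(Equiv.swap a (a + 1))) := by
      rw [show a + (t + 1) + 1 = a + t + 2 by omega, hd]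
      rw [show a + 1 + t + 1 = a + t + 2 by omega]
      rfl
    rw [h1, hw.2.1, ih (a + 1), hw.2.1]
    simp

lemma w_swap_ne (hw : WedgeSymbolSpec w) {a b : ℕ} (hab : a ≠ b) (f : ℕ → ℤ) :
    w (f ∘ ⇑(Equiv.swap a b)) = - w f := by
  rcases Nat.lt_or_ge a b with h | h
  · obtain ⟨t, rfl⟩ : ∃ t, b = a + t + 1 := ⟨b - a - 1, by omega⟩
    exact w_swap_dist hw t a f
  · have hb : b < a := by omega
    obtain ⟨t, rfl⟩ : ∃ t, a = b + t + 1 := ⟨a - b - 1, by omega⟩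
    rw [Equiv.swap_comm]
    exact w_swap_dist hw t b f

lemma update_comp_perm (f : ℕ → ℤ) (σ : Equiv.Perm ℕ) (j : ℕ) (v : ℤ) :
    Function.update (f ∘ ⇑σ) j v = (Function.update f (σ j) v) ∘ ⇑σ := by
  funext x
  by_cases hx : x = j
  · subst hx; simp
  · rw [Function.update_of_ne hx, Function.comp_apply, Function.comp_apply,
      Function.update_of_ne (fun h => hx (σ.injective h))]

lemma update_eq_comp_swap {f : ℕ → ℤ} {p q : ℕ} (hpq : p ≠ q) (h : f p = f q) (v : ℤ) :
    Function.update f p v = (Function.update f q v) ∘ ⇑(Equiv.swap p q) := by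
  funext x
  rcases eq_or_ne x p with rfl | hxp
  · rw [Function.update_self, Function.comp_apply, Equiv.swap_apply_left, Function.update_self]
  · rcases eq_or_ne x q with rfl | hxq
    · rw [Function.update_of_ne hxp, Function.comp_apply, Equiv.swap_apply_right,
        Function.update_of_ne hpq]
      exact h.symm
    · rw [Function.update_of_ne hxp, Function.comp_apply,
        Equiv.swap_apply_of_ne_of_ne hxp hxq, Function.update_of_ne hxq]

end Aux

section Aux2

open Function

variable {w : (ℕ → ℤ) → Fock}

/-- The set of inversions. -/
def InvSet (f : ℕ → ℤ) : Set (ℕ × ℕ) := {p | p.1 < p.2 ∧ f p.1 < f p.2}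

lemma invSet_finite {f : ℕ → ℤ} {M : ℕ} (hf : EvLin f M) : (InvSet f).Finite := by
  classical
  set C : ℕ := M + 1 + (Finset.range M).sup (fun i => (f M - f i).toNat) with hC
  apply Set.Finite.subset ((Finset.range M ×ˢ Finset.range C).finite_toSet)
  rintro ⟨i, j⟩ ⟨hij, hfij⟩
  dsimp only at hij hfij
  simp only [Finset.coe_product, Set.mem_prod, Finset.mem_coe, Finset.mem_range]
  have hiM : i < M := by
    by_contra hi
    push_neg at hi
    obtain ⟨t, rfl⟩ : ∃ t, j = i + (t + 1) := ⟨j - i - 1, by omega⟩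
    have := hf.add hi (t + 1)
    omega
  refine ⟨hiM, ?_⟩
  by_cases hjM : j < M
  · omega
  · push_neg at hjM
    have h1 := hf.add (le_refl M) (j - M)
    rw [show M + (j - M) = j by omega] at h1
    have h2 : ((j - M : ℕ) : ℤ) < f M - f i := by omega
    have h3 : (f M - f i).toNat ≤ (Finset.range M).sup (fun i => (f M - f i).toNat) :=
      Finset.le_sup (f := fun i => (f M - f i).toNat) (Finset.mem_range.2 hiM)
    omega

lemma swap_mono {i a b : ℕ} (hab : a < b) (hne : (a, b) ≠ (i, i + 1)) :
    Equiv.swap i (i + 1) a < Equiv.swap i (i + 1) b := by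
  have h1 : ∀ x : ℕ, Equiv.swap i (i + 1) x = if x = i then i + 1 else if x = i + 1 then i else x :=
    fun x => Equiv.swap_apply_def i (i + 1) x
  rw [h1, h1]
  have : ¬(a = i ∧ b = i + 1) := by
    intro ⟨ha, hb⟩; exact hne (by rw [ha, hb])
  split_ifs <;> omega

lemma invSet_swap_lt {f : ℕ → ℤ} {M : ℕ} (hf : EvLin f M) {i : ℕ} (h : f i < f (i + 1)) :
    (InvSet (f ∘ ⇑(Equiv.swap i (i + 1)))).ncard < (InvSet f).ncard := by
  classical
  set σ := Equiv.swap i (i + 1) with hσ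
  have hswL : σ i = i + 1 := Equiv.swap_apply_left i (i + 1)
  have hswR : σ (i + 1) = i := Equiv.swap_apply_right i (i + 1)
  have hss : ∀ x, σ (σ x) = x := fun x => Equiv.swap_apply_self i (i + 1) x
  have hfin : (InvSet f).Finite := invSet_finite hf
  have hmem : (i, i + 1) ∈ InvSet f := ⟨by omega, h⟩
  have hbij : Set.BijOn (fun p : ℕ × ℕ => (σ p.1, σ p.2)) (InvSet (f ∘ ⇑σ))
      (InvSet f \ {(i, i + 1)}) := by
    refine ⟨?_, ?_, ?_⟩
    · rintro ⟨x, y⟩ ⟨hxy, hv⟩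
      dsimp only at hxy hv
      have hne : (x, y) ≠ (i, i + 1) := by
        intro h'
        rw [Prod.mk.injEq] at h'
        rw [h'.1, h'.2] at hv
        rw [Function.comp_apply, Function.comp_apply, hswL, hswR] at hv
        omega
      refine ⟨⟨swap_mono hxy hne, hv⟩, ?_⟩
      simp only [Set.mem_singleton_iff, Prod.mk.injEq, not_and]
      intro hsx hsy
      have hx : x = i + 1 := by rw [← hss x, hsx, hswL]
      have hy : y = i := by rw [← hss y, hsy, hswR]
      omega
    · rintro ⟨x, y⟩ - ⟨x', y'⟩ - hpq
      rw [Prod.mk.injEq] at hpq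
      exact Prod.ext (σ.injective hpq.1) (σ.injective hpq.2)
    · rintro ⟨x, y⟩ ⟨⟨hxy, hv⟩, hne⟩
      dsimp only at hxy hv
      have hne' : (x, y) ≠ (i, i + 1) := by simpa using hne
      refine ⟨(σ x, σ y), ⟨swap_mono hxy hne', ?_⟩, ?_⟩
      · show (f ∘ ⇑σ) (σ x) < (f ∘ ⇑σ) (σ y)
        rw [Function.comp_apply, Function.comp_apply, hss, hss]
        exact hv
      · show (σ (σ x), σ (σ y)) = (x, y)
        rw [hss, hss]
  have hcard : (InvSet (f ∘ ⇑σ)).ncard = (InvSet f \ {(i, i + 1)}).ncard := by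
    rw [← hbij.image_eq, Set.ncard_image_of_injOn hbij.injOn]
  rw [hcard]
  apply Set.ncard_lt_ncard _ hfin
  constructor
  · exact Set.diff_subset
  · intro hsub
    exact (hsub hmem).2 rfl

end Aux2

section Aux3

open Function

variable {w : (ℕ → ℤ) → Fock} {T : Fock →ₗ[ℂ] Fock} {d : ℤ} {c : ℤ → ℂ}

lemma diag_eval_aux (hw : WedgeSymbolSpec w) (hT : DiagSpec w T d c) :
    ∀ (n : ℕ) (f : ℕ → ℤ) (M : ℕ), EvLin f M → Function.Injective f →
      (InvSet f).ncard = n →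
      T (w f) = ∑ᶠ j, c (f j) • w (Function.update f j (f j + d)) := by
  intro n
  induction n using Nat.strong_induction_on with
  | _ n ih =>
    intro f M hf hinj hn
    by_cases hsa : StrictAnti f
    · have h1 : w f = Finsupp.single (⟨f, hsa, M, fun i hi => hf i hi⟩ : WedgeIdx) 1 :=
        hw.2.2 ⟨f, hsa, M, fun i hi => hf i hi⟩
      rw [h1]; exact hT _
    · have hex : ∃ i, f i < f (i + 1) := by
        by_contra hc
        push_neg at hc
        refine hsa (strictAnti_nat_of_succ_lt (fun i => lt_of_le_of_ne (hc i) (fun he => ?_)))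
        have := hinj he
        omega
      obtain ⟨i, hi⟩ := hex
      set σ := Equiv.swap i (i + 1) with hσ
      have hg : EvLin (f ∘ ⇑σ) (max M (i + 2)) := by
        intro x hx
        have hx1 : i + 2 ≤ x := le_trans (le_max_right _ _) hx
        have hx2 : M ≤ x := le_trans (le_max_left _ _) hx
        show f (σ (x + 1)) = f (σ x) - 1
        rw [hσ, Equiv.swap_apply_of_ne_of_ne (by omega) (by omega),
          Equiv.swap_apply_of_ne_of_ne (by omega) (by omega)]
        exact hf x hx2
      have hinj' : Function.Injective (f ∘ ⇑σ) := hinj.comp σ.injective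
      have hlt := invSet_swap_lt hf hi
      rw [hn] at hlt
      have hIH := ih _ hlt (f ∘ ⇑σ) _ hg hinj' rfl
      have hwg : w (f ∘ ⇑σ) = - w f := hw.2.1 f i
      rw [hwg, map_neg] at hIH
      have hterm : ∀ j, c ((f ∘ ⇑σ) j) • w (Function.update (f ∘ ⇑σ) j ((f ∘ ⇑σ) j + d))
          = - (c (f (σ j)) • w (Function.update f (σ j) (f (σ j) + d))) := by
        intro j
        rw [update_comp_perm f σ j]
        show c (f (σ j)) •
          w ((Function.update f (σ j) (f (σ j) + d)) ∘ ⇑(Equiv.swap i (i + 1))) = _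
        rw [hw.2.1, smul_neg]
      rw [finsum_congr hterm, finsum_neg_distrib] at hIH
      have hre : (∑ᶠ j, c (f (σ j)) • w (Function.update f (σ j) (f (σ j) + d)))
          = ∑ᶠ j, c (f j) • w (Function.update f j (f j + d)) :=
        finsum_comp_equiv σ (f := fun j => c (f j) • w (Function.update f j (f j + d)))
      rw [hre] at hIH
      exact neg_injective hIH

lemma pair_sum_zero (hw : WedgeSymbolSpec w) {f : ℕ → ℤ} {p q : ℕ}
    (hpq : p ≠ q) (hval : f p = f q)
    (huniq : ∀ x y : ℕ, f x = f y → x = y ∨ (x = p ∧ y = q) ∨ (x = q ∧ y = p))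
    (d : ℤ) (c : ℤ → ℂ) :
    ∑ᶠ j, c (f j) • w (Function.update f j (f j + d)) = 0 := by
  classical
  have hsupp : (Function.support fun j => c (f j) • w (Function.update f j (f j + d)))
      ⊆ ↑({p, q} : Finset ℕ) := by
    intro j hj
    simp only [Finset.coe_insert, Finset.coe_singleton, Set.mem_insert_iff,
      Set.mem_singleton_iff]
    by_contra hc
    push_neg at hc
    apply hj
    have h0 : w (Function.update f j (f j + d)) = 0 := by
      apply w_dup hw hpq
      rw [Function.update_of_ne (Ne.symm hc.1), Function.update_of_ne (Ne.symm hc.2)]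
      exact hval
    show c (f j) • w (Function.update f j (f j + d)) = 0
    rw [h0, smul_zero]
  rw [finsum_eq_finset_sum_of_support_subset _ hsupp, Finset.sum_pair hpq]
  have hupd : Function.update f p (f p + d)
      = (Function.update f q (f p + d)) ∘ ⇑(Equiv.swap p q) :=
    update_eq_comp_swap hpq hval (f p + d)
  rw [hupd, w_swap_ne hw hpq, hval]
  simp

lemma diag_eval_update (hw : WedgeSymbolSpec w) (hT : DiagSpec w T d c) {f : ℕ → ℤ} {M : ℕ}
    (hf : EvLin f M) (hinj : Function.Injective f) (i : ℕ) {v : ℤ} (hv : v ≠ f i) :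
    T (w (Function.update f i v)) =
      ∑ᶠ j, c (Function.update f i v j) •
        w (Function.update (Function.update f i v) j (Function.update f i v j + d)) := by
  classical
  have hgl : EvLin (Function.update f i v) (max M (i + 1)) := by
    intro x hx
    have hx1 : i + 1 ≤ x := le_trans (le_max_right _ _) hx
    rw [Function.update_of_ne (by omega : x + 1 ≠ i), Function.update_of_ne (by omega : x ≠ i)]
    exact hf x (le_trans (le_max_left _ _) hx)
  by_cases hginj : Function.Injective (Function.update f i v)
  · exact diag_eval_aux hw hT _ (Function.update f i v) _ hgl hginj rfl
  · rw [hw.1 _ hginj, map_zero]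
    have hex : ∃ p, p ≠ i ∧ f p = v := by
      by_contra hc
      push_neg at hc
      apply hginj
      intro x y hxy
      rcases eq_or_ne x i with hx | hxi
      · rcases eq_or_ne y i with hy | hyi
        · rw [hx, hy]
        · exfalso
          rw [hx, Function.update_self, Function.update_of_ne hyi] at hxy
          exact hc y hyi hxy.symm
      · rcases eq_or_ne y i with hy | hyi
        · exfalso
          rw [hy, Function.update_of_ne hxi, Function.update_self] at hxy
          exact hc x hxi hxy
        · rw [Function.update_of_ne hxi, Function.update_of_ne hyi] at hxy
          exact hinj hxy
    obtain ⟨p, hpi, hfp⟩ := hex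
    refine (pair_sum_zero hw (p := p) (q := i) hpi ?_ ?_ d c).symm
    · rw [Function.update_of_ne hpi, Function.update_self]; exact hfp
    · intro x y hxy
      rcases eq_or_ne x i with hx | hxi
      · rcases eq_or_ne y i with hy | hyi
        · exact Or.inl (hx.trans hy.symm)
        · refine Or.inr (Or.inr ⟨hx, ?_⟩)
          rw [hx, Function.update_self, Function.update_of_ne hyi] at hxy
          exact (hinj (hfp.trans hxy)).symm
      · rcases eq_or_ne y i with hy | hyi
        · refine Or.inr (Or.inl ⟨?_, hy⟩)
          rw [hy, Function.update_of_ne hxi, Function.update_self] at hxy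
          exact hinj (hxy.trans hfp.symm)
        · rw [Function.update_of_ne hxi, Function.update_of_ne hyi] at hxy
          exact Or.inl (hinj hxy)

end Aux3

section Aux4

open Function

variable {w : (ℕ → ℤ) → Fock}

lemma w_update_tail_zero (hw : WedgeSymbolSpec w) {f : ℕ → ℤ} {M : ℕ} (hf : EvLin f M)
    {d : ℤ} (hd : d ≠ 0) {i : ℕ} (hi : M + d.natAbs ≤ i) :
    w (Function.update f i (f i + d)) = 0 := by
  obtain ⟨p, hpi, -, -, hp⟩ := hf.exists_dup hd hi
  apply w_dup hw hpi
  rw [Function.update_of_ne hpi, Function.update_self]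
  exact hp

lemma comp_eval {T₁ T₂ : Fock →ₗ[ℂ] Fock} {d₁ d₂ : ℤ} {c₁ c₂ : ℤ → ℂ}
    (hw : WedgeSymbolSpec w)
    (hT₁ : DiagSpec w T₁ d₁ c₁) (hT₂ : DiagSpec w T₂ d₂ c₂)
    (hd₁ : d₁ ≠ 0) (hd₂ : d₂ ≠ 0) (b : WedgeIdx) {M : ℕ} (hM : EvLin b.1 M) :
    T₁ (T₂ (Finsupp.single b 1)) =
      ∑ i ∈ Finset.range (M + d₁.natAbs + d₂.natAbs),
        ∑ j ∈ Finset.range (M + d₁.natAbs + d₂.natAbs + d₁.natAbs),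
          (c₂ (b.1 i) * c₁ (Function.update b.1 i (b.1 i + d₂) j)) •
            w (Function.update (Function.update b.1 i (b.1 i + d₂)) j
                (Function.update b.1 i (b.1 i + d₂) j + d₁)) := by
  classical
  have hinj : Function.Injective b.1 := b.2.1.injective
  set K := M + d₁.natAbs + d₂.natAbs with hK
  have hgEv : ∀ i : ℕ, EvLin (Function.update b.1 i (b.1 i + d₂)) (max M (i + 1)) := by
    intro i x hx
    have hx1 : i + 1 ≤ x := le_trans (le_max_right _ _) hx
    rw [Function.update_of_ne (by omega : x + 1 ≠ i), Function.update_of_ne (by omega : x ≠ i)]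
    exact hM x (le_trans (le_max_left _ _) hx)
  have hinner : ∀ i : ℕ, i < K →
      c₂ (b.1 i) • T₁ (w (Function.update b.1 i (b.1 i + d₂))) =
      ∑ j ∈ Finset.range (K + d₁.natAbs),
        (c₂ (b.1 i) * c₁ (Function.update b.1 i (b.1 i + d₂) j)) •
          w (Function.update (Function.update b.1 i (b.1 i + d₂)) j
              (Function.update b.1 i (b.1 i + d₂) j + d₁)) := by
    intro i hiK
    have hsub : (Function.support fun j =>
        c₁ (Function.update b.1 i (b.1 i + d₂) j) •
          w (Function.update (Function.update b.1 i (b.1 i + d₂)) j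
              (Function.update b.1 i (b.1 i + d₂) j + d₁)))
        ⊆ ↑(Finset.range (K + d₁.natAbs)) := by
      intro j hj
      simp only [Finset.coe_range, Set.mem_Iio]
      by_contra hcj
      push_neg at hcj
      refine hj ?_
      have h0 : w (Function.update (Function.update b.1 i (b.1 i + d₂)) j
          (Function.update b.1 i (b.1 i + d₂) j + d₁)) = 0 :=
        w_update_tail_zero hw (hgEv i) hd₁ (by omega)
      show _ • _ = (0 : Fock)
      rw [h0, smul_zero]
    have hval : b.1 i + d₂ ≠ b.1 i := by intro h; apply hd₂; omega
    rw [diag_eval_update hw hT₁ hM hinj i hval,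
      smul_finsum' _ (Set.Finite.subset (Finset.range (K + d₁.natAbs)).finite_toSet hsub)]
    have hsub2 : (Function.support fun j =>
        c₂ (b.1 i) • (c₁ (Function.update b.1 i (b.1 i + d₂) j) •
          w (Function.update (Function.update b.1 i (b.1 i + d₂)) j
              (Function.update b.1 i (b.1 i + d₂) j + d₁))))
        ⊆ ↑(Finset.range (K + d₁.natAbs)) := by
      intro j hj
      apply hsub
      simp only [Function.mem_support] at hj ⊢
      intro h0; exact hj (by rw [h0, smul_zero])
    rw [finsum_eq_finset_sum_of_support_subset _ hsub2]
    exact Finset.sum_congr rfl fun j _ => (smul_smul _ _ _)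
  have houter : ∀ i : ℕ, K ≤ i → c₂ (b.1 i) • w (Function.update b.1 i (b.1 i + d₂)) = 0 := by
    intro i hi
    rw [w_update_tail_zero hw hM hd₂ (by omega), smul_zero]
  have hfin : (Function.support fun i =>
      c₂ (b.1 i) • w (Function.update b.1 i (b.1 i + d₂))).Finite := by
    apply Set.Finite.subset (Finset.range K).finite_toSet
    intro i hi
    simp only [Finset.coe_range, Set.mem_Iio]
    by_contra hci; push_neg at hci; exact hi (houter i hci)
  rw [hT₂ b]
  have hmap : T₁ (∑ᶠ i, c₂ (b.1 i) • w (Function.update b.1 i (b.1 i + d₂)))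
      = ∑ᶠ i, T₁ (c₂ (b.1 i) • w (Function.update b.1 i (b.1 i + d₂))) :=
    T₁.toAddMonoidHom.map_finsum hfin
  rw [hmap]
  have hsup2 : (Function.support fun i =>
      T₁ (c₂ (b.1 i) • w (Function.update b.1 i (b.1 i + d₂)))) ⊆ ↑(Finset.range K) := by
    intro i hi
    simp only [Finset.coe_range, Set.mem_Iio]
    by_contra hci; push_neg at hci
    refine hi ?_
    show T₁ (c₂ (b.1 i) • w (Function.update b.1 i (b.1 i + d₂))) = 0
    rw [houter i hci, map_zero]
  rw [finsum_eq_finset_sum_of_support_subset _ hsup2]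
  refine Finset.sum_congr rfl fun i hi => ?_
  rw [map_smul]
  exact hinner i (Finset.mem_range.1 hi)

end Aux4

section Aux5

open Function

variable {w : (ℕ → ℤ) → Fock}

lemma cross_eq (b : WedgeIdx) {d₁ d₂ : ℤ} {c₁ c₂ : ℤ → ℂ}
    (hc : ∀ k, c₂ k * c₁ (k + d₂) = c₁ k * c₂ (k + d₁)) (i j : ℕ) :
    (c₂ (b.1 i) * c₁ (Function.update b.1 i (b.1 i + d₂) j)) •
      w (Function.update (Function.update b.1 i (b.1 i + d₂)) j
          (Function.update b.1 i (b.1 i + d₂) j + d₁))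
    = (c₁ (b.1 j) * c₂ (Function.update b.1 j (b.1 j + d₁) i)) •
      w (Function.update (Function.update b.1 j (b.1 j + d₁)) i
          (Function.update b.1 j (b.1 j + d₁) i + d₂)) := by
  rcases eq_or_ne i j with rfl | hij
  · rw [Function.update_self, Function.update_self, Function.update_idem, Function.update_idem,
      hc (b.1 i), show b.1 i + d₂ + d₁ = b.1 i + d₁ + d₂ from by ring]
  · rw [Function.update_of_ne (Ne.symm hij), Function.update_of_ne hij]
    have hfun : Function.update (Function.update b.1 i (b.1 i + d₂)) j (b.1 j + d₁)
        = Function.update (Function.update b.1 j (b.1 j + d₁)) i (b.1 i + d₂) := by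
      funext x
      rcases eq_or_ne x j with hx | hxj
      · rw [hx, Function.update_self, Function.update_of_ne (Ne.symm hij),
          Function.update_self]
      · rcases eq_or_ne x i with hx | hxi
        · rw [hx, Function.update_of_ne hij, Function.update_self, Function.update_self]
        · rw [Function.update_of_ne hxj, Function.update_of_ne hxi,
            Function.update_of_ne hxi, Function.update_of_ne hxj]
    rw [hfun, mul_comm]

lemma boundary_zero_neg (hw : WedgeSymbolSpec w) (b : WedgeIdx) {M : ℕ} (hM : EvLin b.1 M)
    {e₂ e₁ : ℤ} (h1 : e₁ < 0) {i j : ℕ} (hij : i < j) (hjM : M ≤ j) :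
    w (Function.update (Function.update b.1 i (b.1 i + e₂)) j
        (Function.update b.1 i (b.1 i + e₂) j + e₁)) = 0 := by
  rw [Function.update_of_ne (show j ≠ i by omega)]
  apply w_dup hw (show j + e₁.natAbs ≠ j by omega)
  rw [Function.update_of_ne (by omega : j + e₁.natAbs ≠ j), Function.update_self,
    Function.update_of_ne (by omega : j + e₁.natAbs ≠ i), hM.add hjM e₁.natAbs,
    show (e₁.natAbs : ℤ) = -e₁ from by omega]
  ring

lemma boundary_zero (hw : WedgeSymbolSpec w) (b : WedgeIdx) {M : ℕ} (hM : EvLin b.1 M)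
    {e₁ e₂ : ℤ} (hd₁ : e₁ ≠ 0) (hd₂ : e₂ ≠ 0) (hsum : e₁ + e₂ ≠ 0)
    {i j : ℕ} (hi : i < M + e₁.natAbs + e₂.natAbs) (hj : M + e₁.natAbs + e₂.natAbs ≤ j) :
    w (Function.update (Function.update b.1 i (b.1 i + e₂)) j
        (Function.update b.1 i (b.1 i + e₂) j + e₁)) = 0 := by
  have hij : i ≠ j := by omega
  rcases lt_or_gt_of_ne hd₁ with h1 | h1
  · exact boundary_zero_neg hw b hM h1 (by omega) (by omega)
  · rw [Function.update_of_ne (Ne.symm hij)]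
    rcases eq_or_ne (j - e₁.natAbs) i with hpi | hpi
    · -- the almost-swap position; use the second update's duplicate
      rcases lt_or_gt_of_ne hd₂ with h2 | h2
      · -- e₂ < 0 : duplicate at i + |e₂|
        have hqj : i + e₂.natAbs ≠ j := by
          intro h
          apply hsum
          omega
        apply w_dup hw (show i + e₂.natAbs ≠ i by omega)
        rw [Function.update_of_ne hqj, Function.update_of_ne (by omega : i + e₂.natAbs ≠ i),
          Function.update_of_ne hij, Function.update_self,
          hM.add (show M ≤ i by omega) e₂.natAbs,
          show (e₂.natAbs : ℤ) = -e₂ from by omega]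
        ring
      · -- e₂ > 0 : duplicate at i - |e₂| ≥ M
        apply w_dup hw (show i - e₂.natAbs ≠ i by omega)
        have h3 := hM.add (show M ≤ i - e₂.natAbs by omega) e₂.natAbs
        rw [show i - e₂.natAbs + e₂.natAbs = i by omega] at h3
        rw [Function.update_of_ne (by omega : i - e₂.natAbs ≠ j),
          Function.update_of_ne (by omega : i - e₂.natAbs ≠ i),
          Function.update_of_ne hij, Function.update_self, h3,
          show (e₂.natAbs : ℤ) = e₂ from by omega]
        ring
    · -- duplicate at j - |e₁|
      apply w_dup hw (show j - e₁.natAbs ≠ j by omega)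
      have h3 := hM.add (show M ≤ j - e₁.natAbs by omega) e₁.natAbs
      rw [show j - e₁.natAbs + e₁.natAbs = j by omega] at h3
      rw [Function.update_of_ne (by omega : j - e₁.natAbs ≠ j), Function.update_self,
        Function.update_of_ne hpi, h3, show (e₁.natAbs : ℤ) = e₁ from by omega]
      ring

lemma boundary_heis (hw : WedgeSymbolSpec w) (b : WedgeIdx) {M : ℕ} (hM : EvLin b.1 M)
    {e₁ e₂ : ℤ} (h1 : 0 < e₁) (hs : e₂ = -e₁)
    {i j : ℕ} (hi : i < M + e₁.natAbs + e₂.natAbs) (hj : M + e₁.natAbs + e₂.natAbs ≤ j) :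
    w (Function.update (Function.update b.1 i (b.1 i + e₂)) j
        (Function.update b.1 i (b.1 i + e₂) j + e₁)) =
      if i = j - e₁.natAbs then -(Finsupp.single b 1) else 0 := by
  have hij : i ≠ j := by omega
  rw [Function.update_of_ne (Ne.symm hij)]
  rcases eq_or_ne i (j - e₁.natAbs) with hpi | hpi
  · rw [if_pos hpi]
    have hiM : M ≤ i := by omega
    have hfij := hM.add hiM e₁.natAbs
    rw [show i + e₁.natAbs = j by omega] at hfij
    have hfun : Function.update (Function.update b.1 i (b.1 i + e₂)) j (b.1 j + e₁)
        = b.1 ∘ ⇑(Equiv.swap i j) := by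
      funext x
      rcases eq_or_ne x j with hx | hxj
      · rw [hx, Function.update_self, Function.comp_apply, Equiv.swap_apply_right, hfij,
          show (e₁.natAbs : ℤ) = e₁ from by omega]
        ring
      · rcases eq_or_ne x i with hx | hxi
        · rw [hx, Function.update_of_ne hij, Function.update_self, Function.comp_apply,
            Equiv.swap_apply_left, hfij, hs, show (e₁.natAbs : ℤ) = e₁ from by omega]
          ring
        · rw [Function.update_of_ne hxj, Function.update_of_ne hxi, Function.comp_apply,
            Equiv.swap_apply_of_ne_of_ne hxi hxj]
    rw [hfun, w_swap_ne hw hij, hw.2.2 b]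
  · rw [if_neg hpi]
    apply w_dup hw (show j - e₁.natAbs ≠ j by omega)
    have h3 := hM.add (show M ≤ j - e₁.natAbs by omega) e₁.natAbs
    rw [show j - e₁.natAbs + e₁.natAbs = j by omega] at h3
    rw [Function.update_of_ne (by omega : j - e₁.natAbs ≠ j), Function.update_self,
      Function.update_of_ne (by omega : j - e₁.natAbs ≠ i), h3,
      show (e₁.natAbs : ℤ) = e₁ from by omega]
    ring

end Aux5

section Aux6

open Function

variable {w : (ℕ → ℤ) → Fock}

lemma sum_split (K E : ℕ) (A : ℕ → ℕ → Fock) :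
    ∑ i ∈ Finset.range K, ∑ j ∈ Finset.range (K + E), A i j
    = (∑ i ∈ Finset.range K, ∑ j ∈ Finset.range K, A i j)
      + ∑ i ∈ Finset.range K, ∑ j ∈ Finset.Ico K (K + E), A i j := by
  rw [← Finset.sum_add_distrib]
  refine Finset.sum_congr rfl fun i _ => ?_
  simp only [Finset.range_eq_Ico]
  exact (Finset.sum_Ico_consecutive (A i) (Nat.zero_le K) (by omega : K ≤ K + E)).symm

lemma comm_eval_zero {T₁ T₂ : Fock →ₗ[ℂ] Fock} {d₁ d₂ : ℤ} {c₁ c₂ : ℤ → ℂ}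
    (hw : WedgeSymbolSpec w)
    (hT₁ : DiagSpec w T₁ d₁ c₁) (hT₂ : DiagSpec w T₂ d₂ c₂)
    (hd₁ : d₁ ≠ 0) (hd₂ : d₂ ≠ 0) (hsum : d₁ + d₂ ≠ 0)
    (hc : ∀ k, c₂ k * c₁ (k + d₂) = c₁ k * c₂ (k + d₁)) (b : WedgeIdx) :
    T₁ (T₂ (Finsupp.single b 1)) = T₂ (T₁ (Finsupp.single b 1)) := by
  obtain ⟨M, hM'⟩ := b.2.2
  have hM : EvLin b.1 M := fun i hi => hM' i hi
  rw [comp_eval hw hT₁ hT₂ hd₁ hd₂ b hM, comp_eval hw hT₂ hT₁ hd₂ hd₁ b hM,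
    show M + d₂.natAbs + d₁.natAbs = M + d₁.natAbs + d₂.natAbs from by omega]
  set K := M + d₁.natAbs + d₂.natAbs with hK
  rw [sum_split, sum_split]
  have hz1 : (∑ i ∈ Finset.range K, ∑ j ∈ Finset.Ico K (K + d₁.natAbs),
      (c₂ (b.1 i) * c₁ (Function.update b.1 i (b.1 i + d₂) j)) •
        w (Function.update (Function.update b.1 i (b.1 i + d₂)) j
            (Function.update b.1 i (b.1 i + d₂) j + d₁))) = 0 := by
    refine Finset.sum_eq_zero fun i hi => Finset.sum_eq_zero fun j hj => ?_
    have h1 := Finset.mem_range.1 hi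
    have h2 := (Finset.mem_Ico.1 hj).1
    rw [boundary_zero hw b hM hd₁ hd₂ hsum (by omega) (by omega), smul_zero]
  have hz2 : (∑ i ∈ Finset.range K, ∑ j ∈ Finset.Ico K (K + d₂.natAbs),
      (c₁ (b.1 i) * c₂ (Function.update b.1 i (b.1 i + d₁) j)) •
        w (Function.update (Function.update b.1 i (b.1 i + d₁)) j
            (Function.update b.1 i (b.1 i + d₁) j + d₂))) = 0 := by
    refine Finset.sum_eq_zero fun i hi => Finset.sum_eq_zero fun j hj => ?_
    have h1 := Finset.mem_range.1 hi
    have h2 := (Finset.mem_Ico.1 hj).1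
    rw [boundary_zero hw b hM hd₂ hd₁ (by omega) (by omega) (by omega), smul_zero]
  rw [hz1, hz2, add_zero, add_zero]
  exact (Finset.sum_congr rfl fun i _ => Finset.sum_congr rfl fun j _ =>
    cross_eq b hc i j).trans Finset.sum_comm

lemma comm_eval_heis {T₁ T₂ : Fock →ₗ[ℂ] Fock} {d₁ d₂ : ℤ}
    (hw : WedgeSymbolSpec w)
    (hT₁ : DiagSpec w T₁ d₁ (fun _ => 1)) (hT₂ : DiagSpec w T₂ d₂ (fun _ => 1))
    (hd₁ : d₁ ≠ 0) (hs : d₂ = -d₁) (b : WedgeIdx) :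
    T₁ (T₂ (Finsupp.single b 1)) - T₂ (T₁ (Finsupp.single b 1))
      = ((-d₁ : ℤ) : ℂ) • Finsupp.single b 1 := by
  obtain ⟨M, hM'⟩ := b.2.2
  have hM : EvLin b.1 M := fun i hi => hM' i hi
  have hd₂ : d₂ ≠ 0 := by rw [hs]; simpa using hd₁
  have hnab : d₂.natAbs = d₁.natAbs := by rw [hs, Int.natAbs_neg]
  rw [comp_eval hw hT₁ hT₂ hd₁ hd₂ b hM, comp_eval hw hT₂ hT₁ hd₂ hd₁ b hM, hnab,
    show M + d₁.natAbs + d₁.natAbs + d₁.natAbs = (M + d₁.natAbs + d₁.natAbs) + d₁.natAbs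
      from rfl]
  set K := M + d₁.natAbs + d₁.natAbs with hK
  simp only [one_mul, one_smul]
  rw [sum_split, sum_split]
  have hcross : (∑ i ∈ Finset.range K, ∑ j ∈ Finset.range K,
        w (Function.update (Function.update b.1 i (b.1 i + d₂)) j
            (Function.update b.1 i (b.1 i + d₂) j + d₁)))
      = ∑ i ∈ Finset.range K, ∑ j ∈ Finset.range K,
        w (Function.update (Function.update b.1 i (b.1 i + d₁)) j
            (Function.update b.1 i (b.1 i + d₁) j + d₂)) := by
    refine Eq.trans (Finset.sum_congr rfl fun i _ => Finset.sum_congr rfl fun j _ => ?_)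
      Finset.sum_comm
    have h := cross_eq (w := w) b (c₁ := fun _ => (1 : ℂ)) (c₂ := fun _ => (1 : ℂ))
      (d₁ := d₁) (d₂ := d₂) (fun _ => rfl) i j
    simpa using h
  rw [hcross]
  have habel : ∀ x y z : Fock, (x + y) - (x + z) = y - z := fun x y z => by abel
  rw [habel]
  -- boundary sums
  have hones : ∀ (e₁ e₂ : ℤ), 0 < e₁ → e₂ = -e₁ → e₁.natAbs = d₁.natAbs →
      (∑ i ∈ Finset.range K, ∑ j ∈ Finset.Ico K (K + d₁.natAbs),
        w (Function.update (Function.update b.1 i (b.1 i + e₂)) j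
            (Function.update b.1 i (b.1 i + e₂) j + e₁)))
      = -((d₁.natAbs : ℂ) • Finsupp.single b 1) := by
    intro e₁ e₂ he₁ hse hea
    have hstep : ∀ i ∈ Finset.range K, ∀ j ∈ Finset.Ico K (K + d₁.natAbs),
        w (Function.update (Function.update b.1 i (b.1 i + e₂)) j
            (Function.update b.1 i (b.1 i + e₂) j + e₁))
        = if i = j - e₁.natAbs then -(Finsupp.single b 1) else 0 := by
      intro i hi j hj
      have h1 := Finset.mem_range.1 hi
      have h2 := (Finset.mem_Ico.1 hj).1
      have h3 : e₂.natAbs = d₁.natAbs := by rw [hse, Int.natAbs_neg, hea]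
      exact boundary_heis hw b hM he₁ hse (by omega) (by omega)
    rw [Finset.sum_congr rfl (fun i hi => Finset.sum_congr rfl (fun j hj => hstep i hi j hj)),
      Finset.sum_comm]
    have hjstep : ∀ j ∈ Finset.Ico K (K + d₁.natAbs),
        (∑ i ∈ Finset.range K, if i = j - e₁.natAbs then -(Finsupp.single b (1 : ℂ)) else 0)
        = -(Finsupp.single b 1) := by
      intro j hj
      have h2 := Finset.mem_Ico.1 hj
      rw [Finset.sum_ite_eq' (Finset.range K) (j - e₁.natAbs)
        (fun _ => -(Finsupp.single b (1 : ℂ)))]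
      rw [if_pos (Finset.mem_range.2 (by omega))]
    rw [Finset.sum_congr rfl hjstep, Finset.sum_const, Nat.card_Ico,
      show K + d₁.natAbs - K = d₁.natAbs from by omega]
    rw [← Nat.cast_smul_eq_nsmul ℂ, smul_neg]
  have hzeros : ∀ (e₁ e₂ : ℤ), e₁ < 0 →
      (∑ i ∈ Finset.range K, ∑ j ∈ Finset.Ico K (K + d₁.natAbs),
        w (Function.update (Function.update b.1 i (b.1 i + e₂)) j
            (Function.update b.1 i (b.1 i + e₂) j + e₁))) = 0 := by
    intro e₁ e₂ he₁
    refine Finset.sum_eq_zero fun i hi => Finset.sum_eq_zero fun j hj => ?_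
    have h1 := Finset.mem_range.1 hi
    have h2 := (Finset.mem_Ico.1 hj).1
    exact boundary_zero_neg hw b hM he₁ (by omega) (by omega)
  rcases lt_or_gt_of_ne hd₁ with hneg | hpos
  · rw [hzeros d₁ d₂ hneg, hones d₂ d₁ (by omega) (by omega) hnab, zero_sub, neg_neg]
    congr 1
    have h : (d₁.natAbs : ℤ) = -d₁ := by omega
    rw [← Int.cast_natCast (R := ℂ), h]
  · rw [hones d₁ d₂ hpos hs rfl, hzeros d₂ d₁ (by omega), sub_zero, ← neg_smul]
    congr 1
    have h : (d₁.natAbs : ℤ) = d₁ := Int.natAbs_of_nonneg (le_of_lt hpos)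
    rw [Int.cast_neg, ← Int.cast_natCast (R := ℂ), h]

end Aux6

section Aux7

open Function

variable {w : (ℕ → ℤ) → Fock}

lemma straighten (hw : WedgeSymbolSpec w) :
    ∀ (n : ℕ) (f : ℕ → ℤ) (M : ℕ), EvLin f M → Function.Injective f → (InvSet f).ncard = n →
      ∃ (b : WedgeIdx) (ε : ℂ), (ε = 1 ∨ ε = -1) ∧ w f = ε • Finsupp.single b 1 ∧
        Set.range f = Set.range b.1 := by
  intro n
  induction n using Nat.strong_induction_on with
  | _ n ih =>
    intro f M hf hinj hn
    by_cases hsa : StrictAnti f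
    · exact ⟨⟨f, hsa, M, fun i hi => hf i hi⟩, 1, Or.inl rfl,
        by rw [hw.2.2 ⟨f, hsa, M, fun i hi => hf i hi⟩, one_smul], rfl⟩
    · have hex : ∃ i, f i < f (i + 1) := by
        by_contra hc
        push_neg at hc
        refine hsa (strictAnti_nat_of_succ_lt (fun i => lt_of_le_of_ne (hc i) (fun he => ?_)))
        have := hinj he
        omega
      obtain ⟨i, hi⟩ := hex
      set σ := Equiv.swap i (i + 1) with hσ
      have hg : EvLin (f ∘ ⇑σ) (max M (i + 2)) := by
        intro x hx
        have hx1 : i + 2 ≤ x := le_trans (le_max_right _ _) hx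
        have hx2 : M ≤ x := le_trans (le_max_left _ _) hx
        show f (σ (x + 1)) = f (σ x) - 1
        rw [hσ, Equiv.swap_apply_of_ne_of_ne (by omega) (by omega),
          Equiv.swap_apply_of_ne_of_ne (by omega) (by omega)]
        exact hf x hx2
      have hinj' : Function.Injective (f ∘ ⇑σ) := hinj.comp σ.injective
      have hlt := invSet_swap_lt hf hi
      rw [hn] at hlt
      obtain ⟨b, ε, hε, hwg, hr⟩ := ih _ hlt (f ∘ ⇑σ) _ hg hinj' rfl
      refine ⟨b, -ε, ?_, ?_, ?_⟩
      · rcases hε with h | h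
        · right; rw [h]
        · left; rw [h, neg_neg]
      · have h2 : w f = - w (f ∘ ⇑σ) := by rw [hw.2.1 f i, neg_neg]
        rw [h2, hwg, ← neg_smul]
      · rw [← hr, Set.range_comp, σ.surjective.range_eq, Set.image_univ]

lemma wedge_strictAnti_le (b : WedgeIdx) : ∀ i : ℕ, b.1 i ≤ b.1 0 - i := by
  intro i
  induction i with
  | zero => simp
  | succ i ihh =>
    have := b.2.1 (show i < i + 1 by omega)
    push_cast
    omega

lemma wedge_pos_finite (b : WedgeIdx) : {k : ℤ | 0 < k ∧ k ∈ Set.range b.1}.Finite := by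
  apply Set.Finite.subset ((Set.finite_Iio ((b.1 0).toNat)).image b.1)
  rintro k ⟨hk, ⟨i, rfl⟩⟩
  refine ⟨i, ?_, rfl⟩
  have := wedge_strictAnti_le b i
  simp only [Set.mem_Iio]
  omega

lemma wedge_neg_finite (b : WedgeIdx) : {k : ℤ | k ≤ 0 ∧ k ∉ Set.range b.1}.Finite := by
  obtain ⟨M, hM'⟩ := b.2.2
  have hM : EvLin b.1 M := fun i hi => hM' i hi
  apply Set.Finite.subset (Set.finite_Ioc (b.1 M) 0)
  rintro k ⟨hk, hkr⟩
  refine ⟨?_, hk⟩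
  by_contra hc
  push_neg at hc
  apply hkr
  refine ⟨M + (b.1 M - k).toNat, ?_⟩
  rw [hM.add (le_refl M) _]
  omega

lemma finsum_mem_eq_window (c : ℤ → ℂ) (S : Set ℤ) (hS : S.Finite) (W : Finset ℤ)
    (hSW : S ⊆ ↑W) : ∑ᶠ k ∈ S, c k = ∑ k ∈ W, S.indicator c k := by
  rw [finsum_mem_def,
    finsum_eq_finset_sum_of_support_subset _
      (Set.Subset.trans (Set.support_indicator_subset) hSW)]

lemma lam_eq {c : ℤ → ℂ} (b b' : WedgeIdx) {x y : ℤ}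
    (hx : x ∈ Set.range b.1) (hy : y ∉ Set.range b.1) (hxy : x ≠ y) (hc : c x = c y)
    (hr : Set.range b'.1 = insert y (Set.range b.1 \ {x})) :
    ((∑ᶠ k ∈ {k : ℤ | 0 < k ∧ k ∈ Set.range b'.1}, c k)
      - ∑ᶠ k ∈ {k : ℤ | k ≤ 0 ∧ k ∉ Set.range b'.1}, c k)
    = (∑ᶠ k ∈ {k : ℤ | 0 < k ∧ k ∈ Set.range b.1}, c k)
      - ∑ᶠ k ∈ {k : ℤ | k ≤ 0 ∧ k ∉ Set.range b.1}, c k := by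
  classical
  have hfp := wedge_pos_finite b
  have hfn := wedge_neg_finite b
  have hfp' := wedge_pos_finite b'
  have hfn' := wedge_neg_finite b'
  set W : Finset ℤ := (hfp.toFinset ∪ hfn.toFinset ∪ hfp'.toFinset ∪ hfn'.toFinset)
    ∪ {x, y} with hW
  have hWx : x ∈ W := by simp [hW]
  have hWy : y ∈ W := by simp [hW]
  have hs1 : {k : ℤ | 0 < k ∧ k ∈ Set.range b.1} ⊆ ↑W := by
    intro k hk
    simp only [hW, Finset.coe_union, Set.mem_union, Finset.mem_coe, Set.Finite.mem_toFinset]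
    exact Or.inl (Or.inl (Or.inl (Or.inl hk)))
  have hs2 : {k : ℤ | k ≤ 0 ∧ k ∉ Set.range b.1} ⊆ ↑W := by
    intro k hk
    simp only [hW, Finset.coe_union, Set.mem_union, Finset.mem_coe, Set.Finite.mem_toFinset]
    exact Or.inl (Or.inl (Or.inl (Or.inr hk)))
  have hs3 : {k : ℤ | 0 < k ∧ k ∈ Set.range b'.1} ⊆ ↑W := by
    intro k hk
    simp only [hW, Finset.coe_union, Set.mem_union, Finset.mem_coe, Set.Finite.mem_toFinset]
    exact Or.inl (Or.inl (Or.inr hk))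
  have hs4 : {k : ℤ | k ≤ 0 ∧ k ∉ Set.range b'.1} ⊆ ↑W := by
    intro k hk
    simp only [hW, Finset.coe_union, Set.mem_union, Finset.mem_coe, Set.Finite.mem_toFinset]
    exact Or.inl (Or.inr hk)
  rw [finsum_mem_eq_window c _ hfp' W hs3, finsum_mem_eq_window c _ hfn' W hs4,
    finsum_mem_eq_window c _ hfp W hs1, finsum_mem_eq_window c _ hfn W hs2,
    ← Finset.sum_sub_distrib, ← Finset.sum_sub_distrib, ← sub_eq_zero,
    ← Finset.sum_sub_distrib]
  have hxR' : x ∉ Set.range b'.1 := by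
    rw [hr]
    rintro (h | h)
    · exact hxy h
    · exact h.2 rfl
  have hyR' : y ∈ Set.range b'.1 := by rw [hr]; exact Set.mem_insert y _
  have hother : ∀ k : ℤ, k ≠ x → k ≠ y → (k ∈ Set.range b'.1 ↔ k ∈ Set.range b.1) := by
    intro k hkx hky
    rw [hr]
    constructor
    · rintro (h | h)
      · exact absurd h hky
      · exact h.1
    · intro h
      exact Set.mem_insert_iff.2 (Or.inr ⟨h, hkx⟩)
  have hpt : ∀ k ∈ W,
      (({k : ℤ | 0 < k ∧ k ∈ Set.range b'.1}.indicator c k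
        - {k : ℤ | k ≤ 0 ∧ k ∉ Set.range b'.1}.indicator c k)
      - ({k : ℤ | 0 < k ∧ k ∈ Set.range b.1}.indicator c k
        - {k : ℤ | k ≤ 0 ∧ k ∉ Set.range b.1}.indicator c k))
      = (if k = x then -c x else 0) + (if k = y then c y else 0) := by
    intro k _
    classical
    simp only [Set.indicator_apply, Set.mem_setOf_eq]
    rcases eq_or_ne k x with rfl | hkx
    · rw [if_pos rfl, if_neg hxy,
        if_neg (fun h : 0 < k ∧ k ∈ Set.range b'.1 => hxR' h.2),
        if_neg (fun h : k ≤ 0 ∧ k ∉ Set.range b.1 => h.2 hx)]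
      rcases lt_or_ge 0 k with h0 | h0
      · rw [if_neg (fun h : k ≤ 0 ∧ k ∉ Set.range b'.1 => absurd h.1 (not_le.2 h0)),
          if_pos (⟨h0, hx⟩ : 0 < k ∧ k ∈ Set.range b.1)]
        ring
      · rw [if_pos (⟨h0, hxR'⟩ : k ≤ 0 ∧ k ∉ Set.range b'.1),
          if_neg (fun h : 0 < k ∧ k ∈ Set.range b.1 => absurd h.1 (not_lt.2 h0))]
        ring
    · rcases eq_or_ne k y with rfl | hky
      · rw [if_neg hkx, if_pos rfl,
          if_neg (fun h : 0 < k ∧ k ∈ Set.range b.1 => hy h.2),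
          if_neg (fun h : k ≤ 0 ∧ k ∉ Set.range b'.1 => h.2 hyR')]
        rcases lt_or_ge 0 k with h0 | h0
        · rw [if_pos (⟨h0, hyR'⟩ : 0 < k ∧ k ∈ Set.range b'.1),
            if_neg (fun h : k ≤ 0 ∧ k ∉ Set.range b.1 => absurd h.1 (not_le.2 h0))]
          ring
        · rw [if_neg (fun h : 0 < k ∧ k ∈ Set.range b'.1 => absurd h.1 (not_lt.2 h0)),
            if_pos (⟨h0, hy⟩ : k ≤ 0 ∧ k ∉ Set.range b.1)]
          ring
      · rw [if_neg hkx, if_neg hky, add_zero]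
        rcases lt_or_ge 0 k with h0 | h0
        · rw [if_neg (fun h : k ≤ 0 ∧ k ∉ Set.range b'.1 => absurd h.1 (not_le.2 h0)),
            if_neg (fun h : k ≤ 0 ∧ k ∉ Set.range b.1 => absurd h.1 (not_le.2 h0))]
          by_cases hkR : k ∈ Set.range b.1
          · rw [if_pos (⟨h0, (hother k hkx hky).2 hkR⟩ : 0 < k ∧ k ∈ Set.range b'.1),
              if_pos (⟨h0, hkR⟩ : 0 < k ∧ k ∈ Set.range b.1)]
            ring
          · rw [if_neg (fun h : 0 < k ∧ k ∈ Set.range b'.1 =>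
                hkR ((hother k hkx hky).1 h.2)),
              if_neg (fun h : 0 < k ∧ k ∈ Set.range b.1 => hkR h.2)]
            ring
        · rw [if_neg (fun h : 0 < k ∧ k ∈ Set.range b'.1 => absurd h.1 (not_lt.2 h0)),
            if_neg (fun h : 0 < k ∧ k ∈ Set.range b.1 => absurd h.1 (not_lt.2 h0))]
          by_cases hkR : k ∈ Set.range b.1
          · rw [if_neg (fun h : k ≤ 0 ∧ k ∉ Set.range b'.1 =>
                h.2 ((hother k hkx hky).2 hkR)),
              if_neg (fun h : k ≤ 0 ∧ k ∉ Set.range b.1 => h.2 hkR)]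
            ring
          · rw [if_pos (⟨h0, fun h => hkR ((hother k hkx hky).1 h)⟩ :
                k ≤ 0 ∧ k ∉ Set.range b'.1),
              if_pos (⟨h0, hkR⟩ : k ≤ 0 ∧ k ∉ Set.range b.1)]
            ring
  rw [Finset.sum_congr rfl hpt, Finset.sum_add_distrib,
    Finset.sum_ite_eq' W x (fun _ => -c x), Finset.sum_ite_eq' W y (fun _ => c y),
    if_pos hWx, if_pos hWy, hc]
  ring

end Aux7

section Aux8

open Function

variable {w : (ℕ → ℤ) → Fock}

lemma range_update {f : ℕ → ℤ} (hinj : Function.Injective f) (i : ℕ) (v : ℤ) (hv : v ≠ f i) :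
    Set.range (Function.update f i v) = insert v (Set.range f \ {f i}) := by
  ext k
  simp only [Set.mem_range, Set.mem_insert_iff, Set.mem_diff, Set.mem_singleton_iff]
  constructor
  · rintro ⟨p, hp⟩
    rcases eq_or_ne p i with rfl | hpi
    · rw [Function.update_self] at hp; exact Or.inl hp.symm
    · rw [Function.update_of_ne hpi] at hp
      refine Or.inr ⟨⟨p, hp⟩, ?_⟩
      intro h
      rw [← hp] at h
      exact hpi (hinj h)
  · rintro (rfl | ⟨⟨p, hp⟩, hk⟩)
    · exact ⟨i, Function.update_self i k f⟩
    · have hpi : p ≠ i := fun h => hk (by rw [← hp, h])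
      exact ⟨p, by rw [Function.update_of_ne hpi]; exact hp⟩

lemma cartan_commute {T Bm : Fock →ₗ[ℂ] Fock} {c : ℤ → ℂ} {dB : ℤ}
    (hw : WedgeSymbolSpec w) (hT : CartanSpec T c) (hBm : DiagSpec w Bm dB (fun _ => 1))
    (hdB : dB ≠ 0) (hper : ∀ k : ℤ, c (k + dB) = c k) :
    T ∘ₗ Bm = Bm ∘ₗ T := by
  apply Finsupp.lhom_ext
  intro b r
  have hs1 : (Finsupp.single b r : Fock) = r • Finsupp.single b 1 := by
    rw [Finsupp.smul_single, smul_eq_mul, mul_one]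
  rw [LinearMap.comp_apply, LinearMap.comp_apply, hs1, map_smul, map_smul, map_smul, map_smul]
  congr 1
  obtain ⟨M, hM'⟩ := b.2.2
  have hM : EvLin b.1 M := fun i hi => hM' i hi
  have hinj : Function.Injective b.1 := b.2.1.injective
  have hkey : ∀ i : ℕ, T (w (Function.update b.1 i (b.1 i + dB)))
      = ((∑ᶠ k ∈ {k : ℤ | 0 < k ∧ k ∈ Set.range b.1}, c k)
          - ∑ᶠ k ∈ {k : ℤ | k ≤ 0 ∧ k ∉ Set.range b.1}, c k)
        • w (Function.update b.1 i (b.1 i + dB)) := by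
    intro i
    by_cases hginj : Function.Injective (Function.update b.1 i (b.1 i + dB))
    · have hgEv : EvLin (Function.update b.1 i (b.1 i + dB)) (max M (i + 1)) := by
        intro x hx
        have hx1 : i + 1 ≤ x := le_trans (le_max_right _ _) hx
        rw [Function.update_of_ne (by omega : x + 1 ≠ i),
          Function.update_of_ne (by omega : x ≠ i)]
        exact hM x (le_trans (le_max_left _ _) hx)
      obtain ⟨b', ε, hε, hwg, hr⟩ := straighten hw _ _ _ hgEv hginj rfl
      have hvx : b.1 i + dB ≠ b.1 i := fun h => hdB (by omega)
      have hyR : b.1 i + dB ∉ Set.range b.1 := by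
        rintro ⟨p, hp⟩
        have hpi : p ≠ i := by
          intro h; rw [h] at hp; exact hvx hp.symm
        have heq2 : Function.update b.1 i (b.1 i + dB) p
            = Function.update b.1 i (b.1 i + dB) i := by
          rw [Function.update_of_ne hpi, Function.update_self]; exact hp
        exact hpi (hginj heq2)
      have hrange : Set.range b'.1 = insert (b.1 i + dB) (Set.range b.1 \ {b.1 i}) := by
        rw [← hr]; exact range_update hinj i _ hvx
      have hlam := lam_eq (c := c) b b' (⟨i, rfl⟩ : b.1 i ∈ Set.range b.1) hyR
        (Ne.symm hvx) (hper (b.1 i)).symm hrange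
      rw [hwg, map_smul, hT b', hlam]
      exact smul_comm ε _ _
    · rw [hw.1 _ hginj, map_zero, smul_zero]
  have hz : ∀ i : ℕ, M + dB.natAbs ≤ i →
      (1 : ℂ) • w (Function.update b.1 i (b.1 i + dB)) = 0 := fun i hi => by
    rw [w_update_tail_zero hw hM hdB hi, smul_zero]
  have hfin : (Function.support
      fun i => (1 : ℂ) • w (Function.update b.1 i (b.1 i + dB))).Finite := by
    apply Set.Finite.subset (Finset.range (M + dB.natAbs)).finite_toSet
    intro i hi
    simp only [Finset.coe_range, Set.mem_Iio]
    by_contra hc2; push_neg at hc2; exact hi (hz i hc2)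
  rw [hBm b, hT b, map_smul, hBm b]
  have hmap : T (∑ᶠ i, (1 : ℂ) • w (Function.update b.1 i (b.1 i + dB)))
      = ∑ᶠ i, T ((1 : ℂ) • w (Function.update b.1 i (b.1 i + dB))) :=
    T.toAddMonoidHom.map_finsum hfin
  rw [hmap, smul_finsum' _ hfin]
  refine finsum_congr fun i => ?_
  rw [one_smul]
  exact hkey i

lemma gen_commute {T Bm : Fock →ₗ[ℂ] Fock} {d dB : ℤ} {c : ℤ → ℂ}
    (hw : WedgeSymbolSpec w) (hT : DiagSpec w T d c) (hBm : DiagSpec w Bm dB (fun _ => 1))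
    (hd : d ≠ 0) (hdB : dB ≠ 0) (hsum : d + dB ≠ 0) (hper : ∀ k : ℤ, c (k + dB) = c k) :
    T ∘ₗ Bm = Bm ∘ₗ T := by
  apply Finsupp.lhom_ext
  intro b r
  have hs1 : (Finsupp.single b r : Fock) = r • Finsupp.single b 1 := by
    rw [Finsupp.smul_single, smul_eq_mul, mul_one]
  rw [LinearMap.comp_apply, LinearMap.comp_apply, hs1, map_smul, map_smul, map_smul, map_smul]
  congr 1
  refine comm_eval_zero hw hT hBm hd hdB hsum (fun k => ?_) b
  show (1 : ℂ) * c (k + dB) = c k * 1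
  rw [one_mul, mul_one]
  exact hper k

lemma kbar_period (N : ℕ) (k t : ℤ) : kbar N (k + N * t) = kbar N k := by
  unfold kbar
  rw [show k + (N : ℤ) * t - 1 = (k - 1) + t * N from by ring, Int.add_mul_emod_self_right]

lemma kdot_period (N L : ℕ) (hN : 0 < N) (k t : ℤ) :
    kdot N L (k + N * (L * t)) = kdot N L k := by
  unfold kdot
  rw [kbar_period N k ((L : ℤ) * t)]
  have hNz : (N : ℤ) ≠ 0 := by exact_mod_cast hN.ne'
  rw [show kbar N k - (k + (N : ℤ) * ((L : ℤ) * t))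
      = (kbar N k - k) + (-((L : ℤ) * t)) * N from by ring,
    Int.add_mul_ediv_right _ _ hNz,
    show (kbar N k - k) / N + -((L : ℤ) * t) - 1
      = ((kbar N k - k) / N - 1) + (-t) * L from by ring,
    Int.add_mul_emod_self_right]

end Aux8

/-- (well-definedness) the prescription
`B(m)·(u_{k_1}∧u_{k_2}∧⋯) = Σ_i u_{k_1}∧⋯∧(u_{k_i − NLm})∧⋯` defines linear
operators on `F`; any operators `B(m)` so defined satisfy the Heisenberg relations
`[B(m), B(n)] = LN·m·δ_{m+n,0}·1`; and they commute with all generators of the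
`sl_L^`- and `sl_N^`-actions on `F`. -/
theorem statement_8 (N L : ℕ) (hN : 2 ≤ N) (hL : 2 ≤ L)
    (w : (ℕ → ℤ) → Fock) (hw : WedgeSymbolSpec w)
    (B : ℤ → Fock →ₗ[ℂ] Fock)
    (hB : ∀ m : ℤ, m ≠ 0 → DiagSpec w (B m) (-(N * L * m)) (fun _ => 1)) :
    (∀ m : ℤ, m ≠ 0 → ∃ T : Fock →ₗ[ℂ] Fock,
        DiagSpec w T (-(N * L * m)) (fun _ => 1)) ∧
    (∀ m n : ℤ, m ≠ 0 → n ≠ 0 →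
        B m ∘ₗ B n - B n ∘ₗ B m
          = (if m + n = 0 then ((L : ℂ) * N * m) else 0) • LinearMap.id) ∧
    (∀ T : Fock →ₗ[ℂ] Fock, IsSlNGen N L w T ∨ IsSlLGen N L w T →
        ∀ m : ℤ, m ≠ 0 → T ∘ₗ B m = B m ∘ₗ T) := by
  have hN0 : 0 < N := by omega
  have hN2 : (2 : ℤ) ≤ (N : ℤ) := by exact_mod_cast hN
  have hL2 : (2 : ℤ) ≤ (L : ℤ) := by exact_mod_cast hL
  have hNLpos : (0 : ℤ) < (N : ℤ) * L := by nlinarith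
  have hNlt : (N : ℤ) < (N : ℤ) * L := by nlinarith
  have h1lt : (1 : ℤ) < (N : ℤ) * L := by nlinarith
  have hNLm_ne : ∀ m' : ℤ, m' ≠ 0 → -((N : ℤ) * L * m') ≠ 0 := by
    intro m' hm' h
    rcases mul_eq_zero.1 (neg_eq_zero.1 h) with h' | h'
    · exact hNLpos.ne' h'
    · exact hm' h'
  have hsum_ok : ∀ (m : ℤ), m ≠ 0 → ∀ d : ℤ, -((N : ℤ) * L) < d → d < (N : ℤ) * L →
      d + -((N : ℤ) * L * m) ≠ 0 := by
    intro m hm d hlo hhi h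
    have hd : d = (N : ℤ) * L * m := by linarith
    have hm1 : (1 : ℤ) ≤ |m| := Int.one_le_abs hm
    have habs : |(N : ℤ) * L * m| = ((N : ℤ) * L) * |m| := by
      rw [abs_mul, abs_of_pos hNLpos]
    have h2 : ((N : ℤ) * L) ≤ |(N : ℤ) * L * m| := by rw [habs]; nlinarith
    have h3 : |d| < (N : ℤ) * L := abs_lt.2 ⟨hlo, hhi⟩
    rw [hd] at h3
    linarith
  refine ⟨fun m hm => ⟨B m, hB m hm⟩, ?_, ?_⟩
  · intro m n hm hn
    have hdm := hNLm_ne m hm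
    have hdn := hNLm_ne n hn
    apply Finsupp.lhom_ext
    intro b r
    have hs1 : (Finsupp.single b r : Fock) = r • Finsupp.single b 1 := by
      rw [Finsupp.smul_single, smul_eq_mul, mul_one]
    rw [hs1, map_smul, map_smul]
    congr 1
    simp only [LinearMap.sub_apply, LinearMap.comp_apply, LinearMap.smul_apply,
      LinearMap.id_apply]
    rcases eq_or_ne (m + n) 0 with hmn | hmn
    · rw [if_pos hmn]
      have heq : -((N : ℤ) * L * n) = -(-((N : ℤ) * L * m)) := by
        have : n = -m := by omega
        rw [this]; ring
      have hh := comm_eval_heis hw (hB m hm) (hB n hn) hdm heq b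
      rw [hh]
      congr 1
      push_cast
      ring
    · rw [if_neg hmn, zero_smul]
      have hsum : -((N : ℤ) * L * m) + -((N : ℤ) * L * n) ≠ 0 := by
        intro h
        apply hmn
        have h2 : ((N : ℤ) * L) * (m + n) = 0 := by linear_combination -h
        rcases mul_eq_zero.1 h2 with h' | h'
        · exact absurd h' hNLpos.ne'
        · exact h'
      have hz := comm_eval_zero hw (hB m hm) (hB n hn) hdm hdn hsum (fun k => rfl) b
      rw [hz, sub_self]
  · intro T hT m hm
    have hBm := hB m hm
    have hdB := hNLm_ne m hm
    have hkbar : ∀ k : ℤ, kbar N (k + -((N : ℤ) * L * m)) = kbar N k := by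
      intro k
      rw [show k + -((N : ℤ) * L * m) = k + (N : ℤ) * ((L : ℤ) * (-m)) from by ring,
        kbar_period]
    have hkdot : ∀ k : ℤ, kdot N L (k + -((N : ℤ) * L * m)) = kdot N L k := by
      intro k
      rw [show k + -((N : ℤ) * L * m) = k + (N : ℤ) * ((L : ℤ) * (-m)) from by ring,
        kdot_period N L hN0]
    rcases hT with hslN | hslL
    · rcases hslN with ⟨t, ht1, ht2, hTd⟩ | ⟨t, ht1, ht2, hTd⟩ | hTd | hTd | ⟨t, ht1, ht2, hTd⟩
      · refine gen_commute hw hTd hBm (by norm_num) hdB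
          (hsum_ok m hm _ (by linarith) (by linarith)) (fun k => ?_)
        show (if kbar N (k + -((N : ℤ) * L * m)) = (t : ℤ) + 1 then (1 : ℂ) else 0) = _
        rw [hkbar k]
      · refine gen_commute hw hTd hBm (by norm_num) hdB
          (hsum_ok m hm _ (by linarith) (by linarith)) (fun k => ?_)
        show (if kbar N (k + -((N : ℤ) * L * m)) = (t : ℤ) then (1 : ℂ) else 0) = _
        rw [hkbar k]
      · refine gen_commute hw hTd hBm (by intro h; linarith) hdB
          (hsum_ok m hm _ (by linarith) (by linarith)) (fun k => ?_)
        show (if kbar N (k + -((N : ℤ) * L * m)) = 1 then (1 : ℂ) else 0) = _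
        rw [hkbar k]
      · refine gen_commute hw hTd hBm (by intro h; linarith) hdB
          (hsum_ok m hm _ (by linarith) (by linarith)) (fun k => ?_)
        show (if kbar N (k + -((N : ℤ) * L * m)) = (N : ℤ) then (1 : ℂ) else 0) = _
        rw [hkbar k]
      · refine cartan_commute hw hTd hBm hdB (fun k => ?_)
        show ((if kbar N (k + -((N : ℤ) * L * m)) = (t : ℤ) then (1 : ℂ) else 0)
          - if kbar N (k + -((N : ℤ) * L * m)) = (t : ℤ) + 1 then (1 : ℂ) else 0) = _
        rw [hkbar k]
    · rcases hslL with ⟨s, hs1', hTd⟩ | ⟨s, hs1', hs2', hTd⟩ | hTd | ⟨s, hs1', hs2', hTd⟩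
      · refine gen_commute hw hTd hBm (by intro h; linarith) hdB
          (hsum_ok m hm _ (by linarith) (by linarith)) (fun k => ?_)
        show (if kdot N L (k + -((N : ℤ) * L * m)) = (L : ℤ) - s then (1 : ℂ) else 0) = _
        rw [hkdot k]
      · refine gen_commute hw hTd hBm (by intro h; linarith) hdB
          (hsum_ok m hm _ (by linarith) (by linarith)) (fun k => ?_)
        show (if kdot N L (k + -((N : ℤ) * L * m)) = (L : ℤ) - s + 1 then (1 : ℂ) else 0) = _
        rw [hkdot k]
      · refine gen_commute hw hTd hBm (by intro h; linarith) hdB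
          (hsum_ok m hm _ (by linarith) (by linarith)) (fun k => ?_)
        show (if kdot N L (k + -((N : ℤ) * L * m)) = 1 then (1 : ℂ) else 0) = _
        rw [hkdot k]
      · refine cartan_commute hw hTd hBm hdB (fun k => ?_)
        show ((if kdot N L (k + -((N : ℤ) * L * m)) = (L : ℤ) - s + 1 then (1 : ℂ) else 0)
          - if kdot N L (k + -((N : ℤ) * L * m)) = (L : ℤ) - s then (1 : ℂ) else 0) = _
        rw [hkdot k]

end FockB

end
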